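/- For every natural number n, ∑_{k=0}^{2n} (-2)^k · binom(2n,k) · H_k / (k+1) = 0. -/

import Mathlib

open Finset

/-- The `n`-th harmonic number `H_n = 1 + 1/2 + ⋯ + 1/n` (with `H_0 = 0`). -/
noncomputable def H (n : ℕ) : ℝ := ∑ i ∈ Finset.range n, 1 / ((i : ℝ) + 1)

lemma H_zero : H 0 = 0 := by simp [H]

lemma H_succ (n : ℕ) : H (n + 1) = H n + 1 / ((n : ℝ) + 1) :=
  Finset.sum_range_succ _ n

noncomputable def AA (N : ℕ) : ℝ :=
  ∑ j ∈ range (N + 1), (-2 : ℝ) ^ j * (N.choose j : ℝ) * H j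

noncomputable def CC (N : ℕ) : ℝ :=
  ∑ j ∈ range (N + 1), (-2 : ℝ) ^ j * (N.choose j : ℝ) / (j : ℝ)

noncomputable def DD (N : ℕ) : ℝ :=
  ∑ i ∈ range (N + 1), (-2 : ℝ) ^ i * (N.choose i : ℝ) / ((i : ℝ) + 1)

lemma binsum (N : ℕ) :
    ∑ j ∈ range (N + 1), (-2 : ℝ) ^ j * (N.choose j : ℝ) = (-1 : ℝ) ^ N := by
  have h := add_pow (-2 : ℝ) 1 N
  norm_num at h
  rw [← h]

lemma binsum' (N : ℕ) :
    ∑ j ∈ range (N + 1), (-2 : ℝ) ^ (j + 1) * ((N + 1).choose (j + 1) : ℝ)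
      = (-1 : ℝ) ^ (N + 1) - 1 := by
  have h := binsum (N + 1)
  rw [Finset.sum_range_succ'] at h
  simp at h
  linarith

lemma D_eq (N : ℕ) :
    DD N = (1 - (-1 : ℝ) ^ (N + 1)) / (2 * ((N : ℝ) + 1)) := by
  have key : ∀ i ∈ range (N + 1),
      (-2 : ℝ) ^ i * (N.choose i : ℝ) / ((i : ℝ) + 1)
        = (-2 : ℝ) ^ (i + 1) * ((N + 1).choose (i + 1) : ℝ) / ((-2) * ((N : ℝ) + 1)) := by
    intro i _
    have h := Nat.add_one_mul_choose_eq N i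
    have h' : ((N : ℝ) + 1) * (N.choose i : ℝ)
        = ((N + 1).choose (i + 1) : ℝ) * ((i : ℝ) + 1) := by exact_mod_cast h
    have hi : ((i : ℝ) + 1) ≠ 0 := by positivity
    have hN : ((N : ℝ) + 1) ≠ 0 := by positivity
    field_simp
    linear_combination (2 * (-2 : ℝ) ^ i) * h'
  rw [DD, Finset.sum_congr rfl key, ← Finset.sum_div, binsum']
  have hN : ((N : ℝ) + 1) ≠ 0 := by positivity
  field_simp
  ring

lemma shift_sum_H (N : ℕ) :
    ∑ i ∈ range (N + 1), (-2 : ℝ) ^ (i + 1) * (N.choose (i + 1) : ℝ) * H (i + 1)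
      = AA N := by
  have h : AA N = ∑ j ∈ range (N + 2), (-2 : ℝ) ^ j * (N.choose j : ℝ) * H j := by
    rw [Finset.sum_range_succ]
    simp [AA, Nat.choose_succ_self]
  rw [h]
  conv_rhs => rw [Finset.sum_range_succ']
  simp [H_zero]

lemma shift_sum_C (N : ℕ) :
    ∑ i ∈ range (N + 1), (-2 : ℝ) ^ (i + 1) * (N.choose (i + 1) : ℝ) / ((i : ℝ) + 1)
      = CC N := by
  have h : CC N = ∑ j ∈ range (N + 2), (-2 : ℝ) ^ j * (N.choose j : ℝ) / (j : ℝ) := by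
    rw [Finset.sum_range_succ]
    simp [CC, Nat.choose_succ_self]
  rw [h]
  conv_rhs => rw [Finset.sum_range_succ']
  simp

lemma A_succ (N : ℕ) : AA (N + 1) = -AA N - 2 * DD N := by
  have e1 : AA (N + 1)
      = ∑ i ∈ range (N + 1), (-2 : ℝ) ^ (i + 1) * ((N + 1).choose (i + 1) : ℝ) * H (i + 1) := by
    rw [AA, Finset.sum_range_succ']
    simp [H_zero]
  have e2 : ∀ i ∈ range (N + 1),
      (-2 : ℝ) ^ (i + 1) * ((N + 1).choose (i + 1) : ℝ) * H (i + 1)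
        = (-2 : ℝ) ^ (i + 1) * (N.choose (i + 1) : ℝ) * H (i + 1)
          + (-2) * ((-2 : ℝ) ^ i * (N.choose i : ℝ) * H i)
          + (-2) * ((-2 : ℝ) ^ i * (N.choose i : ℝ) / ((i : ℝ) + 1)) := by
    intro i _
    rw [Nat.choose_succ_succ, H_succ]
    push_cast
    have hi : ((i : ℝ) + 1) ≠ 0 := by positivity
    field_simp
    ring
  rw [e1, Finset.sum_congr rfl e2, Finset.sum_add_distrib, Finset.sum_add_distrib,
    shift_sum_H, ← Finset.mul_sum, ← Finset.mul_sum]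
  rw [show (∑ i ∈ range (N + 1), (-2 : ℝ) ^ i * (N.choose i : ℝ) * H i) = AA N from rfl,
    show (∑ i ∈ range (N + 1), (-2 : ℝ) ^ i * (N.choose i : ℝ) / ((i : ℝ) + 1)) = DD N from rfl]
  ring

lemma C_succ (N : ℕ) : CC (N + 1) = CC N - 2 * DD N := by
  have e1 : CC (N + 1)
      = ∑ i ∈ range (N + 1),
          (-2 : ℝ) ^ (i + 1) * ((N + 1).choose (i + 1) : ℝ) / ((i : ℝ) + 1) := by
    rw [CC, Finset.sum_range_succ']
    simp
  have e2 : ∀ i ∈ range (N + 1),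
      (-2 : ℝ) ^ (i + 1) * ((N + 1).choose (i + 1) : ℝ) / ((i : ℝ) + 1)
        = (-2 : ℝ) ^ (i + 1) * (N.choose (i + 1) : ℝ) / ((i : ℝ) + 1)
          + (-2) * ((-2 : ℝ) ^ i * (N.choose i : ℝ) / ((i : ℝ) + 1)) := by
    intro i _
    rw [Nat.choose_succ_succ]
    push_cast
    have hi : ((i : ℝ) + 1) ≠ 0 := by positivity
    field_simp
    ring
  rw [e1, Finset.sum_congr rfl e2, Finset.sum_add_distrib, shift_sum_C, ← Finset.mul_sum]
  rw [show (∑ i ∈ range (N + 1), (-2 : ℝ) ^ i * (N.choose i : ℝ) / ((i : ℝ) + 1)) = DD N from rfl]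
  ring

lemma D_odd (m : ℕ) : DD (2 * m + 1) = 0 := by
  rw [D_eq]
  have : (-1 : ℝ) ^ (2 * m + 1 + 1) = 1 := by
    rw [show 2 * m + 1 + 1 = 2 * (m + 1) from by ring, pow_mul]
    norm_num
  rw [this]
  simp

lemma AC (n : ℕ) : AA (2 * n + 1) = CC (2 * n + 1) := by
  induction n with
  | zero =>
    simp only [AA, CC]
    rw [Finset.sum_range_succ, Finset.sum_range_succ, Finset.sum_range_succ,
      Finset.sum_range_succ]
    simp [H_zero, H_succ]
  | succ k ih =>
    have h1 : 2 * (k + 1) + 1 = (2 * k + 1) + 1 + 1 := by ring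
    rw [h1, A_succ, A_succ, C_succ, C_succ, D_odd]
    linarith

/-- The even case established in the proof of the paper's main Corollary. -/
theorem stmt_4 (n : ℕ) :
    ∑ k ∈ Finset.range (2 * n + 1),
      (-2 : ℝ) ^ k * ((2 * n).choose k : ℝ) * H k / ((k : ℝ) + 1) = 0 := by
  have key : AA (2 * n + 1) - CC (2 * n + 1)
      = (-2) * ((2 * n : ℝ) + 1) *
        ∑ k ∈ Finset.range (2 * n + 1),
          (-2 : ℝ) ^ k * ((2 * n).choose k : ℝ) * H k / ((k : ℝ) + 1) := by
    rw [AA, CC, ← Finset.sum_sub_distrib, Finset.sum_range_succ', Finset.mul_sum]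
    have h0 : (-2 : ℝ) ^ 0 * (((2 * n + 1).choose 0 : ℕ) : ℝ) * H 0
        - (-2 : ℝ) ^ 0 * (((2 * n + 1).choose 0 : ℕ) : ℝ) / (((0 : ℕ) : ℕ) : ℝ) = 0 := by
      simp [H_zero]
    rw [h0, add_zero]
    apply Finset.sum_congr rfl
    intro i _
    have h := Nat.add_one_mul_choose_eq (2 * n) i
    have hC : ((2 * n + 1).choose (i + 1) : ℝ) * ((i : ℝ) + 1)
        = (2 * (n : ℝ) + 1) * ((2 * n).choose i : ℝ) := by
      exact_mod_cast h.symm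
    have hi : ((i : ℝ) + 1) ≠ 0 := by positivity
    rw [H_succ]
    push_cast
    field_simp
    linear_combination ((-2 : ℝ) ^ (i + 1) * H i) * hC
  have hAC := AC n
  have hne : (-2 : ℝ) * ((2 * n : ℝ) + 1) ≠ 0 := by positivity
  have := key
  rw [hAC] at this
  have h0 : (-2 : ℝ) * ((2 * n : ℝ) + 1) *
      (∑ k ∈ Finset.range (2 * n + 1),
        (-2 : ℝ) ^ k * ((2 * n).choose k : ℝ) * H k / ((k : ℝ) + 1)) = 0 := by linarith
  exact (mul_eq_zero.mp h0).resolve_left hne
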